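/- Let F = (1, S, N, f) be a CA with abstract states S = {s_0, ..., s_{q-1}}, neighborhood of size n, and let φ : S → ℤ be injective. The relabeled CA is number-conserving if and only if for all (x_1,...,x_n) ∈ S^n: φ(f(x_1,...,x_n)) = φ(x_1) + ∑_{k=1}^{n-1} [ φ(f(s_0,...,s_0 (k times), x_2,...,x_{n-k+1})) − φ(f(s_0,...,s_0 (k times), x_1,...,x_{n-k})) ]. -/

import Mathlib

open Finset

/-- Global map of a 1D CA: the local rule `f` is applied to the window of `c` around each cell. -/
def glob (f : (ℤ → ℤ) → ℤ) (c : ℤ → ℤ) : ℤ → ℤ := fun i => f (fun j => c (i + j))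

/-- A configuration over state set `S`. -/
def Config (S : Finset ℤ) (c : ℤ → ℤ) : Prop := ∀ i, c i ∈ S

/-- `p` is a (spatial) period of `c`. -/
def Per (p : ℕ) (c : ℤ → ℤ) : Prop := ∀ i : ℤ, c (i + (p : ℤ)) = c i

/-- The local rule only depends on the neighborhood `{-l,...,r}`. -/
def LocalRule (l r : ℕ) (f : (ℤ → ℤ) → ℤ) : Prop :=
  ∀ c d : ℤ → ℤ, (∀ j : ℤ, -(l : ℤ) ≤ j → j ≤ (r : ℤ) → c j = d j) → f c = f d

/-- The rule maps `S`-configurations to states in `S`. -/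
def Closed (S : Finset ℤ) (f : (ℤ → ℤ) → ℤ) : Prop :=
  ∀ c, Config S c → f c ∈ S

/-- Number conservation: the sum over one period of any spatially periodic
configuration is preserved by the global map. -/
def NC (S : Finset ℤ) (f : (ℤ → ℤ) → ℤ) : Prop :=
  ∀ c : ℤ → ℤ, Config S c → ∀ p : ℕ, 0 < p → Per p c →
    ∑ k ∈ Finset.range p, glob f c (k : ℤ) = ∑ k ∈ Finset.range p, c (k : ℤ)

/-- Global map of a CA with abstract state type S. -/
def globS {S : Type*} (f : (ℤ → S) → S) (c : ℤ → S) : ℤ → S := fun i => f (fun j => c (i + j))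

/-- The abstract local rule only depends on the neighborhood {-l,...,r}. -/
def LocalRuleS {S : Type*} (l r : ℕ) (f : (ℤ → S) → S) : Prop :=
  ∀ c d : ℤ → S, (∀ j : ℤ, -(l : ℤ) ≤ j → j ≤ (r : ℤ) → c j = d j) → f c = f d

/-- The rule obtained by relabeling the states through an injection φ : S → ℤ. -/
noncomputable def relabel {S : Type*} [Nonempty S] (f : (ℤ → S) → S) (φ : S → ℤ) :
    (ℤ → ℤ) → ℤ :=
  fun w => φ (f (fun j => Function.invFun φ (w j)))

/-- The window with k copies of s0 followed by x_{s+1}, ..., x_{s+n-k}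
(positions -l..r, 1-based tuple indexing). -/
def patS {S : Type*} (l : ℕ) (s0 : S) (w : ℤ → S) (k : ℕ) (s : ℤ) : ℤ → S :=
  fun j => if j ≤ (k : ℤ) - (l : ℤ) - 1 then s0 else w (j - (k : ℤ) + s)

/-! ### Auxiliary lemmas -/

private lemma emod_add_cancel (a b : ℤ) : (a + b) % b = a % b := by
  simpa using Int.add_mul_emod_self_left (a := a) (b := b) (c := 1)

private lemma emod_lo {a b : ℤ} (h0 : 0 ≤ a) (h1 : a < b) : a % b = a := Int.emod_eq_of_lt h0 h1

private lemma emod_neg {a b : ℤ} (h0 : -b ≤ a) (h1 : a < 0) : a % b = a + b := by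
  rw [← emod_add_cancel a b]; exact Int.emod_eq_of_lt (by omega) (by omega)

private lemma emod_hi {a b : ℤ} (h0 : b ≤ a) (h1 : a < 2*b) : a % b = a - b := by
  have h : (a - b) % b = a % b := by rw [← emod_add_cancel (a - b) b]; ring_nf
  rw [← h]; exact Int.emod_eq_of_lt (by omega) (by omega)

private lemma sum_shift_one (p : ℕ) (c : ℤ → ℤ) (hc : Per p c) :
    ∑ i ∈ range p, c ((i:ℤ) + 1) = ∑ i ∈ range p, c (i:ℤ) := by
  have h1 : ∑ i ∈ range p, c ((i:ℤ) + 1) = ∑ i ∈ range p, c ((i+1 : ℕ):ℤ) :=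
    Finset.sum_congr rfl fun i _ => by norm_cast
  have h2 := Finset.sum_range_succ' (fun m : ℕ => c (m:ℤ)) p
  have h3 := Finset.sum_range_succ (fun m : ℕ => c (m:ℤ)) p
  have h4 : c ((p:ℕ):ℤ) = c ((0:ℕ):ℤ) := by simpa using hc 0
  rw [h1]
  push_cast at h2 h3 h4 ⊢
  linarith [h2, h3]

private lemma sum_shift (p : ℕ) (t : ℤ) :
    ∀ c : ℤ → ℤ, Per p c → ∑ i ∈ range p, c ((i:ℤ) + t) = ∑ i ∈ range p, c (i:ℤ) := by
  induction t using Int.induction_on with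
  | zero => simp
  | succ t ih =>
    intro c hc
    have hc2 : Per p (fun m => c (m + t)) := fun i => by
      have := hc (i + t); simpa [add_right_comm] using this
    have e1 : ∀ i : ℕ, c ((i:ℤ) + (t+1)) = (fun m => c (m + t)) ((i:ℤ) + 1) := by
      intro i; simp only; ring_nf
    calc ∑ i ∈ range p, c ((i:ℤ) + (t+1)) = ∑ i ∈ range p, (fun m => c (m + t)) ((i:ℤ) + 1) :=
          Finset.sum_congr rfl fun i _ => e1 i
      _ = ∑ i ∈ range p, (fun m => c (m + t)) (i:ℤ) := sum_shift_one p _ hc2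
      _ = ∑ i ∈ range p, c (i:ℤ) := ih c hc
  | pred t ih =>
    intro c hc
    have hc2 : Per p (fun m => c (m + (-(t:ℤ) - 1))) := fun i => by
      have := hc (i + (-(t:ℤ) - 1)); simpa [add_right_comm] using this
    have h5 := sum_shift_one p _ hc2
    have e1 : ∀ i : ℕ, (fun m => c (m + (-(t:ℤ) - 1))) ((i:ℤ) + 1) = c ((i:ℤ) + -(t:ℤ)) := by
      intro i; simp only; ring_nf
    calc ∑ i ∈ range p, c ((i:ℤ) + (-(t:ℤ) - 1))
        = ∑ i ∈ range p, (fun m => c (m + (-(t:ℤ) - 1))) ((i:ℤ) + 1) := by rw [h5]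
      _ = ∑ i ∈ range p, c ((i:ℤ) + -(t:ℤ)) := Finset.sum_congr rfl fun i _ => e1 i
      _ = ∑ i ∈ range p, c (i:ℤ) := ih c hc

/-- block config: w(-l..r) at cells 0..l+r, s0 on the rest of period 2(l+r+1) -/
private def eC {S : Type*} (l r : ℕ) (s0 : S) (w : ℤ → S) (m : ℤ) : S :=
  if m % (2*((l:ℤ)+r+1)) ≤ (l:ℤ)+r then w (m % (2*((l:ℤ)+r+1)) - l) else s0

/-- same but cell 0 replaced by s0 -/
private def eC' {S : Type*} (l r : ℕ) (s0 : S) (w : ℤ → S) (m : ℤ) : S :=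
  if 1 ≤ m % (2*((l:ℤ)+r+1)) ∧ m % (2*((l:ℤ)+r+1)) ≤ (l:ℤ)+r then
    w (m % (2*((l:ℤ)+r+1)) - l) else s0

section win
variable {S : Type*} (l r : ℕ) (f : (ℤ → S) → S) (hl : LocalRuleS l r f) (s0 : S) (w : ℤ → S)
include hl

private lemma low_e (i : ℕ) (hi : i ≤ l) :
    f (fun j => eC l r s0 w ((i:ℤ) + j)) = f (patS l s0 w (l - i) 0) := by
  apply hl
  intro j hj1 hj2
  simp only [eC, patS]
  rcases lt_or_ge ((i:ℤ) + j) 0 with hc | hc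
  · rw [emod_neg (by omega) hc]
    split_ifs <;> first | rfl | (exfalso; omega) | (congr 1; omega)
  · rw [emod_lo hc (by omega)]
    split_ifs <;> first | rfl | (exfalso; omega) | (congr 1; omega)

private lemma low_e' (i : ℕ) (hi : i ≤ l) :
    f (fun j => eC' l r s0 w ((i:ℤ) + j)) = f (patS l s0 w (l - i + 1) 1) := by
  apply hl
  intro j hj1 hj2
  simp only [eC', patS]
  rcases lt_or_ge ((i:ℤ) + j) 0 with hc | hc
  · rw [emod_neg (by omega) hc]
    split_ifs <;> first | rfl | (exfalso; omega) | (congr 1; omega)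
  · rw [emod_lo hc (by omega)]
    split_ifs <;> first | rfl | (exfalso; omega) | (congr 1; omega)

private lemma mid_ee' (i : ℕ) (h1 : l < i) (h2 : (i:ℤ) + r < 2*((l:ℤ)+r+1)) :
    f (fun j => eC l r s0 w ((i:ℤ) + j)) = f (fun j => eC' l r s0 w ((i:ℤ) + j)) := by
  apply hl
  intro j hj1 hj2
  simp only [eC, eC']
  rw [emod_lo (by omega) (by omega)]
  split_ifs <;> first | rfl | (exfalso; omega)

private lemma high_e (i : ℕ) (h1 : 2*((l:ℤ)+r+1) ≤ (i:ℤ) + r) (h2 : i < 2*(l+r+1)) :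
    f (fun j => eC l r s0 w ((i:ℤ) + j)) = f (patS l s0 w (l + (2*(l+r+1) - i)) 0) := by
  apply hl
  intro j hj1 hj2
  simp only [eC, patS]
  rcases lt_or_ge ((i:ℤ) + j) (2*((l:ℤ)+r+1)) with hc | hc
  · rw [emod_lo (by omega) hc]
    split_ifs <;> first | rfl | (exfalso; omega) | (congr 1; omega)
  · rw [emod_hi hc (by omega)]
    split_ifs <;> first | rfl | (exfalso; omega) | (congr 1; omega)

private lemma high_e' (i : ℕ) (h1 : 2*((l:ℤ)+r+1) ≤ (i:ℤ) + r) (h2 : i < 2*(l+r+1)) :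
    f (fun j => eC' l r s0 w ((i:ℤ) + j)) = f (patS l s0 w (l + (2*(l+r+1) - i) + 1) 1) := by
  apply hl
  intro j hj1 hj2
  simp only [eC', patS]
  rcases lt_or_ge ((i:ℤ) + j) (2*((l:ℤ)+r+1)) with hc | hc
  · rw [emod_lo (by omega) hc]
    split_ifs <;> first | rfl | (exfalso; omega) | (congr 1; omega)
  · rw [emod_hi hc (by omega)]
    split_ifs <;> first | rfl | (exfalso; omega) | (congr 1; omega)

private lemma pat_zero : f (patS l s0 w 0 0) = f w := by
  apply hl; intro j hj1 hj2
  simp only [patS]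
  split_ifs <;> first | (exfalso; omega) | (congr 1; omega)

private lemma pat_full : f (patS l s0 w (l + r + 1) 1) = f (fun _ => s0) := by
  apply hl; intro j hj1 hj2
  simp only [patS]
  split_ifs <;> first | rfl | (exfalso; omega)

end win

/-- The relabeled CA is number-conserving iff the relabeling φ satisfies the
linear system coming from the Boccara–Fuks condition. -/
theorem relabeled_numberConserving_iff
    (S : Type) [Fintype S] [Nonempty S] (l r : ℕ) (f : (ℤ → S) → S) (hl : LocalRuleS l r f)
    (s0 : S) (φ : S → ℤ) (hφ : Function.Injective φ) :
    NC (Finset.image φ Finset.univ) (relabel f φ) ↔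
      ∀ w : ℤ → S,
        φ (f w) = φ (w (-(l : ℤ))) +
          ∑ k ∈ Finset.Icc 1 (l + r),
            (φ (f (patS l s0 w k 1)) - φ (f (patS l s0 w k 0))) := by
  constructor
  · -- NC → Boccara–Fuks identity
    intro hnc w
    have hφinv : ∀ s : S, Function.invFun φ (φ s) = s := fun s => Function.leftInverse_invFun hφ s
    have hglobφ : ∀ (d : ℤ → S) (i : ℤ),
        glob (relabel f φ) (fun m => φ (d m)) i = φ (f (fun j => d (i + j))) := by
      intro d i
      show φ (f (fun j => Function.invFun φ (φ (d (i + j))))) = _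
      exact congrArg φ (congrArg f (funext fun j => hφinv _))
    have hconst : φ (f (fun _ => s0)) = φ s0 := by
      have h := hnc (fun _ => φ s0) (fun m => Finset.mem_image.mpr ⟨s0, Finset.mem_univ _, rfl⟩) 1
        one_pos (fun m => rfl)
      rw [Finset.sum_range_one, Finset.sum_range_one] at h
      exact (hglobφ (fun _ => s0) ((0:ℕ):ℤ)).symm.trans h
    set p := 2*(l+r+1) with hp
    have hpz : ((p:ℕ):ℤ) = 2*((l:ℤ)+r+1) := by rw [hp]; push_cast; ring
    have hppos : 0 < p := by omega
    have h1 := hnc (fun m => φ (eC l r s0 w m))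
      (fun m => Finset.mem_image.mpr ⟨_, Finset.mem_univ _, rfl⟩) p hppos
      (by intro i
          show φ (eC l r s0 w (i + (p:ℤ))) = φ (eC l r s0 w i)
          congr 1
          simp only [eC]
          rw [show (i + ((p:ℕ):ℤ)) = i + 2*((l:ℤ)+r+1) from by rw [hpz], emod_add_cancel])
    have h2 := hnc (fun m => φ (eC' l r s0 w m))
      (fun m => Finset.mem_image.mpr ⟨_, Finset.mem_univ _, rfl⟩) p hppos
      (by intro i
          show φ (eC' l r s0 w (i + (p:ℤ))) = φ (eC' l r s0 w i)
          congr 1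
          simp only [eC']
          rw [show (i + ((p:ℕ):ℤ)) = i + 2*((l:ℤ)+r+1) from by rw [hpz], emod_add_cancel])
    set A : ℕ → ℤ := fun k => φ (f (patS l s0 w k 0)) with hA
    set Bq : ℕ → ℤ := fun k => φ (f (patS l s0 w k 1)) with hBq
    set D : ℕ → ℤ := fun i => φ (f (fun j => eC l r s0 w ((i:ℤ) + j)))
      - φ (f (fun j => eC' l r s0 w ((i:ℤ) + j))) with hD
    have key : ∑ i ∈ range p, D i = φ (w (-(l:ℤ))) - φ s0 := by
      have e1 : ∀ i : ℕ, D i = glob (relabel f φ) (fun m => φ (eC l r s0 w m)) (i:ℤ)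
          - glob (relabel f φ) (fun m => φ (eC' l r s0 w m)) (i:ℤ) := by
        intro i
        simp only [hD]
        rw [hglobφ (eC l r s0 w) (i:ℤ), hglobφ (eC' l r s0 w) (i:ℤ)]
      calc ∑ i ∈ range p, D i
          = ∑ i ∈ range p, (glob (relabel f φ) (fun m => φ (eC l r s0 w m)) (i:ℤ)
              - glob (relabel f φ) (fun m => φ (eC' l r s0 w m)) (i:ℤ)) :=
            Finset.sum_congr rfl fun i _ => e1 i
        _ = (∑ i ∈ range p, glob (relabel f φ) (fun m => φ (eC l r s0 w m)) (i:ℤ))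
              - ∑ i ∈ range p, glob (relabel f φ) (fun m => φ (eC' l r s0 w m)) (i:ℤ) :=
            Finset.sum_sub_distrib _ _
        _ = (∑ i ∈ range p, (fun m => φ (eC l r s0 w m)) (i:ℤ))
              - ∑ i ∈ range p, (fun m => φ (eC' l r s0 w m)) (i:ℤ) := by rw [h1, h2]
        _ = ∑ i ∈ range p, (φ (eC l r s0 w (i:ℤ)) - φ (eC' l r s0 w (i:ℤ))) := by
            rw [← Finset.sum_sub_distrib]
        _ = φ (w (-(l:ℤ))) - φ s0 := by
            rw [Finset.sum_eq_single_of_mem 0 (Finset.mem_range.mpr hppos)]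
            · simp only [Nat.cast_zero]
              have hA0 : eC l r s0 w 0 = w (-(l:ℤ)) := by
                simp only [eC]
                rw [Int.zero_emod, if_pos (by omega : (0:ℤ) ≤ (l:ℤ)+r)]
                norm_num
              have hB0 : eC' l r s0 w 0 = s0 := by
                simp only [eC']
                rw [Int.zero_emod, if_neg (by omega : ¬((1:ℤ) ≤ 0 ∧ (0:ℤ) ≤ (l:ℤ)+r))]
              rw [hA0, hB0]
            · intro i hi hne
              have hlt : i < p := Finset.mem_range.mp hi
              have hmod : (i:ℤ) % (2*((l:ℤ)+r+1)) = i := emod_lo (by omega) (by omega)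
              simp only [eC, eC', hmod]
              rw [sub_eq_zero]
              congr 1
              split_ifs <;> first | rfl | (exfalso; omega)
    have hmidzero : ∑ i ∈ Finset.Ico (l+1) (p-r), D i = 0 := by
      apply Finset.sum_eq_zero
      intro i hi
      obtain ⟨hi1, hi2⟩ := Finset.mem_Ico.mp hi
      have hm := mid_ee' l r f hl s0 w i hi1 (by omega)
      simp only [hD]
      rw [hm, sub_self]
    have hlow : ∑ i ∈ Finset.Ico 0 (l+1), D i = ∑ k ∈ range (l+1), (A k - Bq (k+1)) := by
      rw [← Finset.range_eq_Ico]
      rw [← Finset.sum_range_reflect (fun k => A k - Bq (k+1)) (l+1)]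
      apply Finset.sum_congr rfl
      intro i hi
      have hi' : i ≤ l := by have := Finset.mem_range.mp hi; omega
      have hidx : l + 1 - 1 - i = l - i := by omega
      simp only [hD, hA, hBq, hidx]
      rw [low_e l r f hl s0 w i hi', low_e' l r f hl s0 w i hi']
    have hhigh : ∑ i ∈ Finset.Ico (p-r) p, D i = ∑ m ∈ range r, (A (l+1+m) - Bq (l+1+m+1)) := by
      rw [Finset.sum_Ico_eq_sum_range]
      have hr9 : p - (p - r) = r := by omega
      rw [hr9]
      rw [← Finset.sum_range_reflect (fun m => A (l+1+m) - Bq (l+1+m+1)) r]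
      apply Finset.sum_congr rfl
      intro m hm
      have hm' : m < r := Finset.mem_range.mp hm
      have hidx : l + (2*(l+r+1) - (p - r + m)) = l+1+(r-1-m) := by omega
      simp only [hD, hA, hBq]
      rw [high_e l r f hl s0 w (p-r+m) (by omega) (by omega),
        high_e' l r f hl s0 w (p-r+m) (by omega) (by omega), hidx]
    have hsum2 : ∑ k ∈ range (l+1+r), (A k - Bq (k+1))
        = (∑ k ∈ range (l+1), (A k - Bq (k+1))) + ∑ m ∈ range r, (A (l+1+m) - Bq (l+1+m+1)) := by
      rw [Finset.range_eq_Ico,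
        ← Finset.sum_Ico_consecutive _ (by omega : 0 ≤ l+1) (by omega : l+1 ≤ l+1+r),
        ← Finset.range_eq_Ico]
      congr 1
      rw [Finset.sum_Ico_eq_sum_range]
      have hr8 : l+1+r - (l+1) = r := by omega
      rw [hr8]
    have hsplit : ∑ i ∈ range p, D i
        = (∑ i ∈ Finset.Ico 0 (l+1), D i)
          + ((∑ i ∈ Finset.Ico (l+1) (p-r), D i) + ∑ i ∈ Finset.Ico (p-r) p, D i) := by
      rw [Finset.range_eq_Ico,
        ← Finset.sum_Ico_consecutive D (by omega : 0 ≤ l+1) (by omega : l+1 ≤ p),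
        ← Finset.sum_Ico_consecutive D (by omega : l+1 ≤ p-r) (by omega : p-r ≤ p)]
    have hcomb : ∑ k ∈ range (l+1+r), (A k - Bq (k+1)) = φ (w (-(l:ℤ))) - φ s0 := by
      rw [hsum2, ← hlow, ← hhigh]
      rw [hsplit] at key
      linarith [key, hmidzero]
    have hq : l + 1 + r = (l + r) + 1 := by omega
    rw [hq] at hcomb
    rw [Finset.sum_range_succ' (fun k => A k - Bq (k+1)) (l+r)] at hcomb
    beta_reduce at hcomb
    have hSA : ∑ i ∈ range (l+r), (A (i+1) - Bq (i+1+1))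
        = (∑ i ∈ range (l+r), A (i+1)) - ∑ i ∈ range (l+r), Bq (i+1+1) := Finset.sum_sub_distrib _ _
    have hshift : ∑ i ∈ range (l+r), Bq (i+1+1)
        = (∑ i ∈ range (l+r), Bq (i+1)) + Bq (l+r+1) - Bq (0+1) := by
      have e1 := Finset.sum_range_succ' (fun i => Bq (i+1)) (l+r)
      have e2 := Finset.sum_range_succ (fun i => Bq (i+1)) (l+r)
      beta_reduce at e1 e2
      linarith [e1, e2]
    have hA0 : A 0 = φ (f w) := congrArg φ (pat_zero l r f hl s0 w)
    have hBtop : Bq (l+r+1) = φ s0 := by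
      have := congrArg φ (pat_full l r f hl s0 w)
      simp only [hBq]
      rw [this]
      exact hconst
    have hgoalsum : ∑ k ∈ Finset.Icc 1 (l+r), (φ (f (patS l s0 w k 1)) - φ (f (patS l s0 w k 0)))
        = (∑ i ∈ range (l+r), Bq (i+1)) - ∑ i ∈ range (l+r), A (i+1) := by
      rw [← Finset.Ico_add_one_right_eq_Icc, Finset.sum_Ico_eq_sum_range]
      have hr7 : l + r + 1 - 1 = l + r := by omega
      rw [hr7, ← Finset.sum_sub_distrib]
      apply Finset.sum_congr rfl
      intro i _
      simp only [hA, hBq]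
      rw [Nat.add_comm 1 i]
    rw [hgoalsum]
    linarith [hcomb, hSA, hshift, hA0, hBtop]
  · -- Boccara–Fuks identity → NC
    intro H c hc p hp hper
    have hφd : ∀ m, φ (Function.invFun φ (c m)) = c m := by
      intro m
      obtain ⟨s, _, hs⟩ := Finset.mem_image.mp (hc m)
      exact Function.invFun_eq ⟨s, hs⟩
    set d : ℤ → S := fun m => Function.invFun φ (c m) with hd
    set B : ℤ → ℕ → ℤ := fun i k => φ (f (patS l s0 (fun j => d (i + j)) k 0)) with hB
    have hpat : ∀ (i : ℤ) (k : ℕ),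
        patS l s0 (fun j => d (i + j)) k 1 = patS l s0 (fun j => d ((i+1) + j)) k 0 := by
      intro i k
      funext j
      simp only [patS]
      by_cases hj : j ≤ (k:ℤ) - l - 1
      · rw [if_pos hj, if_pos hj]
      · rw [if_neg hj, if_neg hj]
        congr 1
        ring
    have hglob : ∀ i : ℤ, glob (relabel f φ) c i
        = c (i - l) + ∑ k ∈ Finset.Icc 1 (l+r), (B (i+1) k - B i k) := by
      intro i
      have h1 : glob (relabel f φ) c i = φ (f (fun j => d (i + j))) := rfl
      rw [h1, H (fun j => d (i + j))]
      congr 1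
      · show φ (d (i + -(l:ℤ))) = c (i - l)
        rw [show i + -(l:ℤ) = i - l from by ring]
        exact hφd _
      · apply Finset.sum_congr rfl
        intro k _
        rw [hpat i k]
    calc ∑ i ∈ range p, glob (relabel f φ) c (i:ℤ)
        = ∑ i ∈ range p, (c ((i:ℤ) - l)
            + ∑ k ∈ Finset.Icc 1 (l+r), (B ((i:ℤ)+1) k - B (i:ℤ) k)) :=
          Finset.sum_congr rfl fun i _ => hglob i
      _ = (∑ i ∈ range p, c ((i:ℤ) - l))
            + ∑ i ∈ range p, ∑ k ∈ Finset.Icc 1 (l+r), (B ((i:ℤ)+1) k - B (i:ℤ) k) :=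
          Finset.sum_add_distrib
      _ = ∑ i ∈ range p, c (i:ℤ) := by
          have hs : ∑ i ∈ range p, c ((i:ℤ) - l) = ∑ i ∈ range p, c (i:ℤ) := by
            have h6 := sum_shift p (-(l:ℤ)) c hper
            calc ∑ i ∈ range p, c ((i:ℤ) - l)
                = ∑ i ∈ range p, c ((i:ℤ) + -(l:ℤ)) := by
                  apply Finset.sum_congr rfl; intro i _; rw [sub_eq_add_neg]
              _ = _ := h6
          have ht : ∑ i ∈ range p, ∑ k ∈ Finset.Icc 1 (l+r), (B ((i:ℤ)+1) k - B (i:ℤ) k) = 0 := by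
            rw [Finset.sum_comm]
            apply Finset.sum_eq_zero
            intro k _
            have hcast : ∀ i : ℕ, B ((i:ℤ)+1) k = B (((i+1:ℕ)):ℤ) k := by
              intro i; norm_cast
            have h7 : ∑ i ∈ range p, (B ((i:ℤ)+1) k - B (i:ℤ) k)
                = ∑ i ∈ range p, (B (((i+1:ℕ)):ℤ) k - B ((i:ℕ):ℤ) k) := by
              apply Finset.sum_congr rfl; intro i _; rw [hcast i]
            rw [h7, Finset.sum_range_sub (fun m : ℕ => B (m:ℤ) k) p]
            have hBper : B ((p:ℕ):ℤ) k = B ((0:ℕ):ℤ) k := by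
              simp only [hB]
              congr 1
              apply congrArg
              funext j
              simp only [patS]
              by_cases hj : j ≤ (k:ℤ) - l - 1
              · rw [if_pos hj, if_pos hj]
              · rw [if_neg hj, if_neg hj]
                simp only [hd]
                have h8 : ((p:ℕ):ℤ) + (j - (k:ℤ) + 0) = (j - (k:ℤ) + 0) + (p:ℤ) := by ring
                rw [h8, hper (j - (k:ℤ) + 0)]
                norm_num
            rw [hBper, sub_self]
          rw [hs, ht, add_zero]
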